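/- Fix points z, y ∈ ℝⁿ and scalars r₁, r₂ > 0, ε ∈ [0,1], and C ≥ 0 such that r₁² − εr₂² − C ≥ 0 and (1−ε)r₂² − C ≥ 0. Suppose ‖y − z‖ ≥ r₂ and ‖y − z‖ ≤ √(r₁² − εr₂² − C) + √((1−ε)r₂² − C). Define z* = (1−λ)z + λy with λ = (2r₂² − r₁²)/(2r₂²) if r₁² ≤ 2r₂², and z* = z if r₁² > 2r₂². Then every point w satisfying ‖w − y‖² ≤ r₁² − εr₂² − C and ‖w − z‖² ≤ (1−ε)r₂² − C satisfies ‖w − z*‖² ≤ (1 − √ε)r₁² − C. -/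

import Mathlib

open scoped RealInnerProductSpace

/-- the key ball-intersection corollary used in the geometric
descent analysis. -/
theorem ball_intersection_corollary {n : ℕ} (z y : EuclideanSpace ℝ (Fin n))
    (r₁ r₂ ε C : ℝ) (hr₁ : 0 < r₁) (hr₂ : 0 < r₂) (hε0 : 0 ≤ ε) (hε1 : ε ≤ 1)
    (hC : 0 ≤ C)
    (h1 : 0 ≤ r₁ ^ 2 - ε * r₂ ^ 2 - C) (h2 : 0 ≤ (1 - ε) * r₂ ^ 2 - C)
    (hlb : r₂ ≤ ‖y - z‖)
    (hub : ‖y - z‖ ≤ Real.sqrt (r₁ ^ 2 - ε * r₂ ^ 2 - C)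
        + Real.sqrt ((1 - ε) * r₂ ^ 2 - C))
    (zstar : EuclideanSpace ℝ (Fin n))
    (hzstar : zstar =
      if r₁ ^ 2 ≤ 2 * r₂ ^ 2 then
        (1 - (2 * r₂ ^ 2 - r₁ ^ 2) / (2 * r₂ ^ 2)) • z
          + ((2 * r₂ ^ 2 - r₁ ^ 2) / (2 * r₂ ^ 2)) • y
      else z) :
    ∀ w : EuclideanSpace ℝ (Fin n),
      ‖w - y‖ ^ 2 ≤ r₁ ^ 2 - ε * r₂ ^ 2 - C →
      ‖w - z‖ ^ 2 ≤ (1 - ε) * r₂ ^ 2 - C →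
      ‖w - zstar‖ ^ 2 ≤ (1 - Real.sqrt ε) * r₁ ^ 2 - C := by
  intro w ha hb
  set s := Real.sqrt ε with hs
  have hs2 : s ^ 2 = ε := Real.sq_sqrt hε0
  have hs0 : 0 ≤ s := Real.sqrt_nonneg ε
  have hs1 : s ≤ 1 := by nlinarith
  have hd : r₂ ^ 2 ≤ ‖y - z‖ ^ 2 := by
    have := norm_nonneg (y - z)
    nlinarith
  have key : ‖w - y‖ ^ 2
      = ‖w - z‖ ^ 2 - 2 * ⟪w - z, y - z⟫ + ‖y - z‖ ^ 2 := by
    have h := @norm_sub_sq_real (EuclideanSpace ℝ (Fin n)) _ _ (w - z) (y - z)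
    rw [sub_sub_sub_cancel_right] at h
    linarith [h]
  by_cases hcase : r₁ ^ 2 ≤ 2 * r₂ ^ 2
  · rw [if_pos hcase] at hzstar
    set l : ℝ := (2 * r₂ ^ 2 - r₁ ^ 2) / (2 * r₂ ^ 2) with hl
    have hr2sq : (0:ℝ) < 2 * r₂ ^ 2 := by positivity
    have hlmul : l * (2 * r₂ ^ 2) = 2 * r₂ ^ 2 - r₁ ^ 2 := by
      rw [hl]; field_simp
    have hl0 : 0 ≤ l := by
      apply div_nonneg (by linarith) (by linarith)
    have hl1 : l ≤ 1 := by
      rw [hl, div_le_one hr2sq]; nlinarith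
    have hw : w - zstar = (w - z) - l • (y - z) := by
      rw [hzstar]
      simp only [sub_smul, one_smul, smul_sub]
      abel
    have hnorm : ‖w - zstar‖ ^ 2
        = ‖w - z‖ ^ 2 - 2 * l * ⟪w - z, y - z⟫ + l ^ 2 * ‖y - z‖ ^ 2 := by
      rw [hw]
      have h := @norm_sub_sq_real (EuclideanSpace ℝ (Fin n)) _ _ (w - z) (l • (y - z))
      rw [real_inner_smul_right, norm_smul] at h
      rw [h]
      rw [Real.norm_eq_abs, mul_pow, sq_abs]
      ring
    -- express inner product from key
    have hinner : 2 * ⟪w - z, y - z⟫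
        = ‖w - z‖ ^ 2 + ‖y - z‖ ^ 2 - ‖w - y‖ ^ 2 := by linarith
    -- step: exact formula
    have hform : ‖w - zstar‖ ^ 2
        = (1 - l) * ‖w - z‖ ^ 2 + l * ‖w - y‖ ^ 2 - l * (1 - l) * ‖y - z‖ ^ 2 := by
      linear_combination hnorm - l * key
    have hstep2 : ‖w - zstar‖ ^ 2
        ≤ (1 - l) * ((1 - ε) * r₂ ^ 2 - C) + l * (r₁ ^ 2 - ε * r₂ ^ 2 - C)
          - l * (1 - l) * r₂ ^ 2 := by
      rw [hform]
      linarith [mul_nonneg hl0 (sub_nonneg.2 hl1),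
        mul_nonneg (mul_nonneg hl0 (sub_nonneg.2 hl1)) (sub_nonneg.2 hd),
        mul_nonneg hl0 (sub_nonneg.2 ha),
        mul_nonneg (sub_nonneg.2 hl1) (sub_nonneg.2 hb)]
    refine hstep2.trans ?_
    have heq : (1 - s) * r₁ ^ 2 - C - ((1 - l) * ((1 - ε) * r₂ ^ 2 - C)
          + l * (r₁ ^ 2 - ε * r₂ ^ 2 - C) - l * (1 - l) * r₂ ^ 2)
        = (r₁ ^ 2 - 2 * s * r₂ ^ 2) ^ 2 / (4 * r₂ ^ 2) := by
      rw [hl, ← hs2]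
      field_simp
      ring
    have hpos : 0 ≤ (r₁ ^ 2 - 2 * s * r₂ ^ 2) ^ 2 / (4 * r₂ ^ 2) := by positivity
    linarith
  · rw [if_neg hcase] at hzstar
    rw [hzstar]
    push_neg at hcase
    nlinarith [hb, mul_nonneg (sub_nonneg.2 hs1) (sq_nonneg r₂),
      mul_nonneg (sub_nonneg.2 hs1) (sq_nonneg r₁)]
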